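/- Let M be an MSC over P and Σ. For all events e, f ∈ E: e < f if and only if there exists π ∈ Π^gossip with (e,f) ∈ ⟦π⟧. In other words, the strict causal order < equals the union of the relations ⟦π⟧ over all π ∈ Π^gossip. -/

import Mathlib

namespace Gossip

/-- Events extended with bottom and top elements. -/
inductive ExtEv (E : Type) : Type where
  | bot : ExtEv E
  | evt (e : E) : ExtEv E
  | top : ExtEv E

/-- A message sequence chart (MSC) over processes `P`, alphabet `A`,
with (finite, nonempty) set of events `E`. -/
structure MSC (P A E : Type) : Type where
  fintypeE : Fintype E
  nonemptyE : Nonempty E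
  loc : E → P
  lab : E → A
  /-- process successor relation `→` -/
  next : E → E → Prop
  /-- message relation `◁` -/
  msg : E → E → Prop
  next_loc : ∀ {e f : E}, next e f → loc e = loc f
  next_irrefl : ∀ e : E, ¬ next e e
  next_right_unique : ∀ {e f f' : E}, next e f → next e f' → f = f'
  next_left_unique : ∀ {e e' f : E}, next e f → next e' f → e = e'
  next_total : ∀ e f : E, loc e = loc f →
      Relation.ReflTransGen next e f ∨ Relation.ReflTransGen next f e
  msg_loc : ∀ {e f : E}, msg e f → loc e ≠ loc f
  /-- every event belongs to at most one pair of `◁` -/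
  msg_unique : ∀ {e f e' f' : E}, msg e f → msg e' f' →
      (e = e' ∨ e = f' ∨ f = e' ∨ f = f') → e = e' ∧ f = f'
  fifo : ∀ {e f e' f' : E}, msg e f → msg e' f' → loc e = loc e' → loc f = loc f' →
      (Relation.ReflTransGen next e e' ↔ Relation.ReflTransGen next f f')
  /-- `≤ = (→ ∪ ◁)*` is a partial order -/
  causal_antisymm : ∀ {e f : E},
      Relation.ReflTransGen (fun x y => next x y ∨ msg x y) e f →
      Relation.ReflTransGen (fun x y => next x y ∨ msg x y) f e → e = f

namespace MSC

variable {P A E B : Type}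

/-- the causal order `≤ = (→ ∪ ◁)*` -/
def le (M : MSC P A E) : E → E → Prop :=
  Relation.ReflTransGen (fun x y => M.next x y ∨ M.msg x y)

/-- the strict causal order `<` -/
def lt (M : MSC P A E) (e f : E) : Prop := M.le e f ∧ e ≠ f

/-- `→*` -/
def nextStar (M : MSC P A E) : E → E → Prop := Relation.ReflTransGen M.next

/-- the causal order extended to `E ∪ {⊥,⊤}` with `⊥ < e < ⊤` -/
def extLe (M : MSC P A E) : ExtEv E → ExtEv E → Prop
  | .bot, _ => True
  | _, .top => True
  | .evt e, .evt f => M.le e f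
  | _, _ => False

def extLt (M : MSC P A E) (x y : ExtEv E) : Prop := M.extLe x y ∧ x ≠ y

/-- replace the labelling of an MSC (e.g. to pair it with an extra labelling) -/
def relabel (M : MSC P A E) (μ : E → B) : MSC P B E where
  fintypeE := M.fintypeE
  nonemptyE := M.nonemptyE
  loc := M.loc
  lab := μ
  next := M.next
  msg := M.msg
  next_loc := M.next_loc
  next_irrefl := M.next_irrefl
  next_right_unique := M.next_right_unique
  next_left_unique := M.next_left_unique
  next_total := M.next_total
  msg_loc := M.msg_loc
  msg_unique := M.msg_unique
  fifo := M.fifo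
  causal_antisymm := M.causal_antisymm

end MSC

/-- letters of path expressions: `→`, `→*`, `p▷q`, `⟨a⟩` -/
inductive PathLetter (P A : Type) : Type where
  | next : PathLetter P A
  | nextStar : PathLetter P A
  | msg (p q : P) : PathLetter P A
  | lab (a : A) : PathLetter P A

/-- path expressions: finite words over `Γ` -/
abbrev PathExpr (P A : Type) := List (PathLetter P A)

variable {P A E : Type}

def letterSem (M : MSC P A E) : PathLetter P A → E → E → Prop
  | .next => M.next
  | .nextStar => M.nextStar
  | .msg p q => fun e f => M.loc e = p ∧ M.loc f = q ∧ M.msg e f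
  | .lab a => fun e f => e = f ∧ M.lab e = a

/-- `⟦π⟧` -/
def pathSem (M : MSC P A E) : PathExpr P A → E → E → Prop
  | [] => fun e f => e = f
  | l :: π => fun e g => ∃ f, letterSem M l e f ∧ pathSem M π f g

def letterComp : PathLetter P A → P → P → Prop
  | .msg p q => fun x y => x = p ∧ y = q
  | _ => fun x y => x = y

/-- `Comp(π)`; `π ∈ Π_{p,q}` iff `pcomp π p q` -/
def pcomp : PathExpr P A → P → P → Prop
  | [] => fun x y => x = y
  | l :: π => fun x z => ∃ y, letterComp l x y ∧ pcomp π y z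

/-- `IsLast M π e x` holds iff `x = last_π(e)` (with `x = ⊥` iff no `π`-path into `e`). -/
def IsLast (M : MSC P A E) (π : PathExpr P A) (e : E) : ExtEv E → Prop
  | .bot => ∀ f, ¬ pathSem M π f e
  | .evt g => pathSem M π g e ∧ ∀ f, pathSem M π f e → M.le f g
  | .top => False

/-- `IsFirst M π e x` holds iff `x = first_π(e)` (with `x = ⊤` iff no `π`-path out of `e`). -/
def IsFirst (M : MSC P A E) (π : PathExpr P A) (e : E) : ExtEv E → Prop
  | .top => ∀ f, ¬ pathSem M π e f
  | .evt g => pathSem M π e g ∧ ∀ f, pathSem M π e f → M.le g f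
  | .bot => False

/-- `IsFa M π π' e x` holds iff `x = f_{π,π'}(e) = first_{π'}(last_π(e))`, with
`first_{π'}(⊥) := ⊥`. -/
def IsFa (M : MSC P A E) (π π' : PathExpr P A) (e : E) (x : ExtEv E) : Prop :=
  (IsLast M π e ExtEv.bot ∧ x = ExtEv.bot) ∨
    ∃ g, IsLast M π e (ExtEv.evt g) ∧ IsFirst M π' g x

/-- `IsLastProc M p e x` holds iff `x = last_p(e)`, the maximal event of process `p`
strictly below `e` (`⊥` if none). -/
def IsLastProc (M : MSC P A E) (p : P) (e : E) : ExtEv E → Prop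
  | .bot => ∀ f, M.loc f = p → ¬ M.lt f e
  | .evt g => M.loc g = p ∧ M.lt g e ∧ ∀ f, M.loc f = p → M.lt f e → M.le f g
  | .top => False

/-- `π ≼_e π'`, i.e. `last_π(e) ≤ last_{π'}(e)` -/
def ple (M : MSC P A E) (π π' : PathExpr P A) (e : E) : Prop :=
  ∃ x y, IsLast M π e x ∧ IsLast M π' e y ∧ M.extLe x y

def gossipSuffix : P → List P → PathExpr P A
  | _, [] => []
  | p, q :: w => PathLetter.msg p q :: PathLetter.nextStar :: gossipSuffix q w

/-- `π_w` for `w = p :: rest` -/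
def gossipExpr (p : P) (w : List P) : PathExpr P A :=
  match w with
  | [] => [PathLetter.next, PathLetter.nextStar]
  | _ :: _ => PathLetter.nextStar :: gossipSuffix p w

/-- `π ∈ Π^gossip` -/
def IsGossip (π : PathExpr P A) : Prop :=
  ∃ (p : P) (w : List P), (p :: w).Nodup ∧ π = gossipExpr p w

/-- actions of a CFM transition -/
inductive CAct (P A Msg : Type) : Type where
  | internal (a : A) : CAct P A Msg
  | send (a : A) (m : Msg) (q : P) : CAct P A Msg
  | recv (a : A) (m : Msg) (q : P) : CAct P A Msg

def CAct.labelOf {P A Msg : Type} : CAct P A Msg → A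
  | .internal a => a
  | .send a _ _ => a
  | .recv a _ _ => a

/-- a communicating finite-state machine over `P` and `A` -/
structure CFM (P A : Type) : Type 1 where
  Msg : Type
  msgFin : Fintype Msg
  S : Type
  sFin : Fintype S
  ι : P → S
  Δ : P → Set (S × CAct P A Msg × S)
  Acc : Set (P → S)
  wf_send : ∀ p s a m q s', (s, CAct.send a m q, s') ∈ Δ p → q ≠ p
  wf_recv : ∀ p s a m q s', (s, CAct.recv a m q, s') ∈ Δ p → q ≠ p

namespace CFM

variable {P A E : Type}

/-- `ρ` is a run of the CFM `C` on the MSC `M` -/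
def IsRun (C : CFM P A) (M : MSC P A E) (ρ : E → C.S × CAct P A C.Msg × C.S) : Prop :=
  (∀ e, ρ e ∈ C.Δ (M.loc e)) ∧
  (∀ e, ((ρ e).2.1).labelOf = M.lab e) ∧
  (∀ e, (¬ ∃ f, M.next f e) → (ρ e).1 = C.ι (M.loc e)) ∧
  (∀ e f, M.next e f → (ρ e).2.2 = (ρ f).1) ∧
  (∀ e, (¬ ∃ f, M.msg e f) → (¬ ∃ f, M.msg f e) → ∃ a, (ρ e).2.1 = CAct.internal a) ∧
  (∀ e f, M.msg e f → ∃ m, (ρ e).2.1 = CAct.send (M.lab e) m (M.loc f) ∧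
      (ρ f).2.1 = CAct.recv (M.lab f) m (M.loc e))

/-- the run `ρ` is accepting -/
def IsAccepting (C : CFM P A) (M : MSC P A E)
    (ρ : E → C.S × CAct P A C.Msg × C.S) : Prop :=
  ∃ s : P → C.S, s ∈ C.Acc ∧ ∀ p,
    ((∃ e, M.loc e = p) → ∃ e, M.loc e = p ∧ (¬ ∃ f, M.next e f) ∧ s p = (ρ e).2.2) ∧
    ((¬ ∃ e, M.loc e = p) → s p = C.ι p)

/-- `M ∈ L(C)` -/
def Accepts (C : CFM P A) (M : MSC P A E) : Prop :=
  ∃ ρ, C.IsRun M ρ ∧ C.IsAccepting M ρ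

/-- deterministic CFMs -/
def Deterministic (C : CFM P A) : Prop :=
  ∀ p s γ₁ s₁ γ₂ s₂, (s, γ₁, s₁) ∈ C.Δ p → (s, γ₂, s₂) ∈ C.Δ p →
    CAct.labelOf γ₁ = CAct.labelOf γ₂ →
    ((∀ a₁ a₂, γ₁ = CAct.internal a₁ → γ₂ = CAct.internal a₂ → s₁ = s₂) ∧
     (∀ a₁ m₁ a₂ m₂ q, γ₁ = CAct.send a₁ m₁ q → γ₂ = CAct.send a₂ m₂ q →
        s₁ = s₂ ∧ m₁ = m₂) ∧
     (∀ a₁ a₂ m q, γ₁ = CAct.recv a₁ m q → γ₂ = CAct.recv a₂ m q → s₁ = s₂))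

end CFM

/-- acceptance of the extended MSC `(M, ξ)` by a CFM over a product alphabet -/
def AcceptsExt {P A E Ξ : Type} (C : CFM P (A × Ξ)) (M : MSC P A E) (ξ : E → Ξ) : Prop :=
  C.Accepts (M.relabel fun e => (M.lab e, ξ e))

/-- apply `μ` to an extended event, sending both `⊥` and `⊤` to `none` -/
def extToOptMap {E Θ : Type} (μ : E → Θ) : ExtEv E → Option Θ
  | .evt g => some (μ g)
  | _ => none

/-- apply `μ` to an extended event, preserving `⊥` and `⊤` -/
def extMap {E Θ : Type} (μ : E → Θ) : ExtEv E → ExtEv Θ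
  | .bot => ExtEv.bot
  | .evt g => ExtEv.evt (μ g)
  | .top => ExtEv.top

/-- formulas of the temporal logic TL -/
inductive TL (P A : Type) : Type where
  | lab (a : A) : TL P A
  | proc (p : P) : TL P A
  | disj (φ ψ : TL P A) : TL P A
  | neg (φ : TL P A) : TL P A
  | co (φ : TL P A) : TL P A
  | tuntil (φ ψ : TL P A) : TL P A
  | tsince (φ ψ : TL P A) : TL P A

/-- `M, e ⊨ φ` -/
def TLsat (M : MSC P A E) : TL P A → E → Prop
  | .lab a, e => M.lab e = a
  | .proc p, e => M.loc e = p
  | .disj φ ψ, e => TLsat M φ e ∨ TLsat M ψ e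
  | .neg φ, e => ¬ TLsat M φ e
  | .co φ, e => ∃ f, ¬ M.le e f ∧ ¬ M.le f e ∧ TLsat M φ f
  | .tuntil φ ψ, e => ∃ f, M.lt e f ∧ TLsat M ψ f ∧ ∀ g, M.lt e g → M.lt g f → TLsat M φ g
  | .tsince φ ψ, e => ∃ f, M.lt f e ∧ TLsat M ψ f ∧ ∀ g, M.lt f g → M.lt g e → TLsat M φ g

section Aux

variable {P A E : Type}

/-- auxiliary semantics: `Sem M e w f` means there is a path
`e →* e₁ ◁ f₁ →* e₂ ◁ f₂ … →* f` whose message targets land on processes `w`. -/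
def Sem (M : MSC P A E) (e : E) : List P → E → Prop
  | [], f => M.nextStar e f
  | q :: w, f => ∃ e' f', M.nextStar e e' ∧ M.msg e' f' ∧ M.loc f' = q ∧ Sem M f' w f

theorem nextStar_le (M : MSC P A E) {e f : E} (h : M.nextStar e f) : M.le e f :=
  Relation.ReflTransGen.mono (fun _ _ hn => Or.inl hn) _ _ h

theorem msg_le (M : MSC P A E) {e f : E} (h : M.msg e f) : M.le e f :=
  Relation.ReflTransGen.single (Or.inr h)

theorem le_trans' (M : MSC P A E) {e f g : E} (h : M.le e f) (h' : M.le f g) : M.le e g :=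
  Relation.ReflTransGen.trans h h'

theorem nextStar_loc (M : MSC P A E) {e f : E} (h : M.nextStar e f) : M.loc e = M.loc f := by
  induction h with
  | refl => rfl
  | tail _ hstep ih => exact ih.trans (M.next_loc hstep)

theorem sem_le (M : MSC P A E) {e f : E} : ∀ {w : List P}, Sem M e w f → M.le e f := by
  intro w
  induction w generalizing e with
  | nil => exact fun h => nextStar_le M h
  | cons q w ih =>
    rintro ⟨e', f', h1, h2, _, h4⟩
    exact le_trans' M (nextStar_le M h1) (le_trans' M (msg_le M h2) (ih h4))

theorem sem_glue (M : MSC P A E) {e m f : E} {w : List P} (h : M.nextStar e m)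
    (h' : Sem M m w f) : Sem M e w f := by
  cases w with
  | nil => exact Relation.ReflTransGen.trans h h'
  | cons q w =>
    obtain ⟨e', f', h1, h2, h3, h4⟩ := h'
    exact ⟨e', f', Relation.ReflTransGen.trans h h1, h2, h3, h4⟩

theorem sem_combine (M : MSC P A E) {e m f : E} : ∀ {w₁ w₂ : List P},
    Sem M e w₁ m → Sem M m w₂ f → Sem M e (w₁ ++ w₂) f := by
  intro w₁
  induction w₁ generalizing e with
  | nil => exact fun h h' => sem_glue M h h'
  | cons q w ih =>
    rintro w₂ ⟨e', f', h1, h2, h3, h4⟩ h'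
    exact ⟨e', f', h1, h2, h3, ih h4 h'⟩

theorem sem_split (M : MSC P A E) {e f : E} : ∀ {w₁ w₂ : List P},
    Sem M e (w₁ ++ w₂) f → ∃ m, Sem M e w₁ m ∧ Sem M m w₂ f := by
  intro w₁
  induction w₁ generalizing e with
  | nil => exact fun h => ⟨e, Relation.ReflTransGen.refl, h⟩
  | cons q w ih =>
    rintro w₂ ⟨e', f', h1, h2, h3, h4⟩
    obtain ⟨m, hm1, hm2⟩ := ih h4
    exact ⟨m, ⟨e', f', h1, h2, h3, hm1⟩, hm2⟩

theorem sem_last_loc (M : MSC P A E) {e m : E} {w₁ : List P} {q : P}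
    (h : Sem M e (w₁ ++ [q]) m) : M.loc m = q := by
  obtain ⟨m', _, h2⟩ := sem_split M h
  obtain ⟨e', f', _, _, h3, h4⟩ := h2
  exact (nextStar_loc M h4).symm.trans h3

theorem le_nextStar_of_loc (M : MSC P A E) {e f : E} (h : M.le e f)
    (hl : M.loc e = M.loc f) : M.nextStar e f := by
  rcases M.next_total e f hl with h' | h'
  · exact h'
  · have := M.causal_antisymm h (nextStar_le M h')
    subst this; exact Relation.ReflTransGen.refl

theorem dup_decomp {α : Type} : ∀ {l : List α}, ¬ l.Nodup →
    ∃ (q : α) (l₁ l₂ l₃ : List α), l = l₁ ++ q :: l₂ ++ q :: l₃ := by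
  intro l hl
  induction l with
  | nil => exact absurd List.nodup_nil hl
  | cons a l ih =>
    by_cases ha : a ∈ l
    · obtain ⟨s, t, rfl⟩ := List.append_of_mem ha
      exact ⟨a, [], s, t, rfl⟩
    · have hnl : ¬ l.Nodup := fun h => hl (List.nodup_cons.mpr ⟨ha, h⟩)
      obtain ⟨q, l₁, l₂, l₃, rfl⟩ := ih hnl
      exact ⟨q, a :: l₁, l₂, l₃, rfl⟩

theorem sem_nodupify (M : MSC P A E) {e f : E} : ∀ (n : ℕ) (w : List P), w.length ≤ n →
    Sem M e w f → ∃ w', (M.loc e :: w').Nodup ∧ Sem M e w' f := by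
  intro n
  induction n with
  | zero =>
    intro w hw h
    have : w = [] := List.eq_nil_of_length_eq_zero (Nat.le_zero.mp hw)
    subst this
    exact ⟨[], List.nodup_singleton _, h⟩
  | succ n ih =>
    intro w hw h
    by_cases hnd : (M.loc e :: w).Nodup
    · exact ⟨w, hnd, h⟩
    · obtain ⟨q, l₁, l₂, l₃, hdec⟩ := dup_decomp hnd
      cases l₁ with
      | nil =>
        -- duplicate with the head: `q = M.loc e`, `w = l₂ ++ q :: l₃`
        simp only [List.nil_append, List.cons.injEq] at hdec
        obtain ⟨rfl, rfl⟩ := hdec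
        have h' : Sem M e ((l₂ ++ [M.loc e]) ++ l₃) f := by simpa using h
        obtain ⟨m, hm1, hm2⟩ := sem_split M h'
        have hlocm : M.loc m = M.loc e := sem_last_loc M hm1
        have hem : M.nextStar e m :=
          le_nextStar_of_loc M (sem_le M hm1) hlocm.symm
        have h3 : Sem M e l₃ f := sem_glue M hem hm2
        refine ih l₃ ?_ h3
        simp only [List.append_eq, List.length_append, List.length_cons, List.length_nil] at hw ⊢
        omega
      | cons a l₁' =>
        simp only [List.cons_append, List.cons.injEq] at hdec
        obtain ⟨-, rfl⟩ := hdec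
        have h' : Sem M e ((l₁' ++ [q]) ++ (l₂ ++ q :: l₃)) f := by simpa using h
        obtain ⟨m, hm1, hm2⟩ := sem_split M h'
        have h'' : Sem M m ((l₂ ++ [q]) ++ l₃) f := by simpa using hm2
        obtain ⟨m', hm1', hm2'⟩ := sem_split M h''
        have hlocm : M.loc m = q := sem_last_loc M hm1
        have hlocm' : M.loc m' = q := sem_last_loc M hm1'
        have hmm : M.nextStar m m' :=
          le_nextStar_of_loc M (sem_le M hm1') (by rw [hlocm, hlocm'])
        have h3 : Sem M m l₃ f := sem_glue M hmm hm2'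
        have h4 : Sem M e ((l₁' ++ [q]) ++ l₃) f := sem_combine M hm1 h3
        refine ih _ ?_ h4
        simp only [List.append_eq, List.length_append, List.length_cons, List.length_nil] at hw ⊢
        omega

theorem sem_snoc_next (M : MSC P A E) {e g f : E} {w : List P} (h : Sem M e w g)
    (h' : M.next g f) : Sem M e w f := by
  have : Sem M g ([] : List P) f := Relation.ReflTransGen.single h'
  simpa using sem_combine M h this

theorem sem_snoc_msg (M : MSC P A E) {e g f : E} {w : List P} (h : Sem M e w g)
    (h' : M.msg g f) : Sem M e (w ++ [M.loc f]) f := by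
  have : Sem M g [M.loc f] f :=
    ⟨g, f, Relation.ReflTransGen.refl, h', rfl, Relation.ReflTransGen.refl⟩
  exact sem_combine M h this

theorem le_sem (M : MSC P A E) {e f : E} (h : M.le e f) : ∃ w, Sem M e w f := by
  induction h with
  | refl => exact ⟨[], Relation.ReflTransGen.refl⟩
  | tail _ hstep ih =>
    obtain ⟨w, hw⟩ := ih
    rcases hstep with hn | hm
    · exact ⟨w, sem_snoc_next M hw hn⟩
    · exact ⟨_, sem_snoc_msg M hw hm⟩

theorem sem_to_path (M : MSC P A E) {e f : E} : ∀ {w : List P}, w ≠ [] →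
    Sem M e w f →
    pathSem M (PathLetter.nextStar :: gossipSuffix (M.loc e) w) e f := by
  intro w
  induction w generalizing e with
  | nil => exact fun h => absurd rfl h
  | cons q w ih =>
    rintro - ⟨e', f', h1, h2, h3, h4⟩
    refine ⟨e', h1, f', ⟨(nextStar_loc M h1).symm, h3, h2⟩, ?_⟩
    cases w with
    | nil =>
      exact ⟨f, h4, rfl⟩
    | cons r w' =>
      have := ih (e := f') (by simp) h4
      rwa [h3] at this

theorem path_suffix_le (M : MSC P A E) {e f : E} : ∀ {w : List P} {p : P},
    pathSem M (PathLetter.nextStar :: gossipSuffix p w) e f → M.le e f := by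
  intro w
  induction w generalizing e with
  | nil =>
    rintro p ⟨g, hg, hgf⟩
    simp only [pathSem, gossipSuffix] at hgf
    subst hgf
    exact nextStar_le M hg
  | cons q w ih =>
    rintro p ⟨g, hg, h, ⟨_, _, hmsg⟩, hrest⟩
    exact le_trans' M (nextStar_le M hg)
      (le_trans' M (msg_le M hmsg) (ih hrest))

end Aux

end Gossip
open Gossip in
/-- `< = ⋃_{π ∈ Π^gossip} ⟦π⟧`. -/
theorem stmt9 {P A E : Type} [Fintype P] [Fintype A] (M : MSC P A E) (e f : E) :
    M.lt e f ↔ ∃ π : PathExpr P A, IsGossip π ∧ pathSem M π e f := by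
  constructor
  · rintro ⟨hle, hne⟩
    obtain ⟨w, hw⟩ := le_sem M hle
    obtain ⟨w', hnd, hw'⟩ := sem_nodupify M w.length w le_rfl hw
    cases w' with
    | nil =>
      -- `e →* f` with `e ≠ f`
      rcases Relation.ReflTransGen.cases_head hw' with rfl | ⟨g, hg, hgf⟩
      · exact absurd rfl hne
      · refine ⟨gossipExpr (M.loc e) [], ⟨M.loc e, [], by simp, rfl⟩, ?_⟩
        exact ⟨g, hg, f, hgf, rfl⟩
    | cons q rest =>
      exact ⟨gossipExpr (M.loc e) (q :: rest), ⟨M.loc e, q :: rest, hnd, rfl⟩,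
        sem_to_path M (by simp) hw'⟩
  · rintro ⟨π, ⟨p, w, hnd, rfl⟩, hpath⟩
    cases w with
    | nil =>
      obtain ⟨g, hg, h, hgh, rfl⟩ := hpath
      have hle : M.le e h :=
        le_trans' M (Relation.ReflTransGen.single (Or.inl hg)) (nextStar_le M hgh)
      refine ⟨hle, ?_⟩
      rintro rfl
      have : e = g := M.causal_antisymm (Relation.ReflTransGen.single (Or.inl hg))
        (nextStar_le M hgh)
      subst this
      exact M.next_irrefl e hg
    | cons q w' =>
      obtain ⟨g, hg, h, ⟨hlg, hlh, hmsg⟩, hrest⟩ := hpath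
      have hle : M.le e f :=
        le_trans' M (nextStar_le M hg)
          (le_trans' M (msg_le M hmsg) (path_suffix_le M hrest))
      refine ⟨hle, ?_⟩
      rintro rfl
      have hge : M.le h g :=
        le_trans' M (path_suffix_le M hrest) (nextStar_le M hg)
      have : g = h := M.causal_antisymm (msg_le M hmsg) hge
      exact M.msg_loc hmsg (by rw [this])
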